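/- Triangle forcing lemma: let (G, rk) be an SRTI instance containing three vertices v, v', v'' with edges {v,v'}, {v,v''}, {v',v''} ∈ E(G), where v' and v'' have no neighbors in G other than the two indicated ones, and with ranks rk_{v'}(v'') = 1, rk_{v'}(v) = 2, rk_{v''}(v) = 1, rk_{v''}(v') = 2 (the ranks that v assigns to v' and v'' are arbitrary). Then in every stable matching M of G, the vertex v is matched, i.e., M(v) ≠ v. -/

import Mathlib

open scoped Classical

noncomputable section

/-- A matching of a graph `G`, given by the partner function: `partner v = v` means
that `v` is unmatched, and otherwise `v` is matched to `partner v`, which must be one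
of its neighbours in the acceptability graph `G`. -/
structure Matching {V : Type} (G : SimpleGraph V) where
  partner : V → V
  involutive : ∀ v, partner (partner v) = v
  adj_of_ne : ∀ v, partner v ≠ v → G.Adj v (partner v)

/-- The set of edges of a matching. -/
def Matching.edgeSet {V : Type} {G : SimpleGraph V} (M : Matching G) : Set (Sym2 V) :=
  {e | ∃ v, M.partner v ≠ v ∧ e = s(v, M.partner v)}

/-- The pair `{v, w}` is blocking for the matching `M` (with respect to the rank
functions `rk`, where `rk v w = ⊤` encodes that `v` prefers any acceptable partner to
`w`; in particular `rk v v = ⊤`, so that an unmatched agent prefers every neighbour to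
staying alone): `v` and `w` are adjacent, and each strictly prefers the other to its
current situation. -/
def IsBlocking {V : Type} (G : SimpleGraph V) (rk : V → V → ℕ∞) (M : Matching G)
    (v w : V) : Prop :=
  G.Adj v w ∧ rk v w < rk v (M.partner v) ∧ rk w v < rk w (M.partner w)

/-- A matching is stable if no edge of `G` is blocking. -/
def Stable {V : Type} (G : SimpleGraph V) (rk : V → V → ℕ∞) (M : Matching G) : Prop :=
  ∀ v w : V, ¬ IsBlocking G rk M v w
/-- Triangle forcing lemma: if `G` contains a triangle `v, v', v''`
in which `v'` and `v''` have no neighbours other than the indicated ones, with ranks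
`rk_{v'}(v'') = 1`, `rk_{v'}(v) = 2`, `rk_{v''}(v) = 1`, `rk_{v''}(v') = 2`, then in
every stable matching `M` of `G` the vertex `v` is matched. -/
theorem matched_of_triangle {V : Type} [Fintype V] [DecidableEq V]
    (G : SimpleGraph V) (rk : V → V → ℕ∞)
    (hself : ∀ u, rk u u = ⊤)
    (hfin : ∀ u w, G.Adj u w → rk u w ≠ ⊤)
    (v v' v'' : V)
    (h1 : G.Adj v v') (h2 : G.Adj v v'') (h3 : G.Adj v' v'')
    (hv' : ∀ w, G.Adj v' w → w = v ∨ w = v'')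
    (hv'' : ∀ w, G.Adj v'' w → w = v ∨ w = v')
    (r1 : rk v' v'' = 1) (r2 : rk v' v = 2)
    (r3 : rk v'' v = 1) (r4 : rk v'' v' = 2)
    (M : Matching G) (hM : Stable G rk M) :
    M.partner v ≠ v := by
  intro hv
  by_cases hp' : M.partner v' = v'
  · -- v' unmatched: show v'' unmatched, then {v',v''} blocks
    have hp'' : M.partner v'' = v'' := by
      by_contra h
      have hadj := M.adj_of_ne v'' h
      rcases hv'' _ hadj with he | he
      · -- M.partner v'' = v, so M.partner v = v'', but M.partner v = v
        have hi := M.involutive v''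
        rw [he, hv] at hi
        exact G.loopless.irrefl v (hi ▸ h2)
      · -- M.partner v'' = v', so M.partner v' = v'', but = v'
        have hi := M.involutive v''
        rw [he, hp'] at hi
        exact G.loopless.irrefl v' (hi ▸ h3)
    exact hM v' v'' ⟨h3, by
      rw [hp', hself, r1]; exact lt_top_iff_ne_top.mpr (by simp), by
      rw [hp'', hself, r4]; exact lt_top_iff_ne_top.mpr (by simp)⟩
  · have hadj := M.adj_of_ne v' hp'
    rcases hv' _ hadj with he | he
    · have hi := M.involutive v'
      rw [he, hv] at hi
      exact G.loopless.irrefl v (hi ▸ h1)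
    · have hq : M.partner v'' = v' := by
        have hi := M.involutive v'
        rw [he] at hi; exact hi
      exact hM v'' v ⟨h2.symm, by
        rw [hq, r3, r4]; exact (by norm_num), by
        rw [hv, hself]; exact lt_top_iff_ne_top.mpr (hfin v v'' h2)⟩


end
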